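/- For p ∈ [0,1] and x > 0, one has ∑_{n=1}^∞ (x/n)^p · x^n / n! ≤ 2^p (e^x − 1). -/

import Mathlib

open Real

/-- Tangent line inequality at `t = 2` for the concave function `t ↦ t ^ p`. -/
lemma aux_tangent {t p : ℝ} (ht : 0 ≤ t) (hp0 : 0 ≤ p) (hp1 : p ≤ 1) :
    t ^ p ≤ 2 ^ p * (1 - p) + p * 2 ^ (p - 1) * t := by
  have h2 : (0:ℝ) < 2 := by norm_num
  have key : (t / 2) ^ p ≤ 1 + p * (t / 2 - 1) := by
    have := rpow_one_add_le_one_add_mul_self (s := t / 2 - 1)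
      (by linarith [div_nonneg ht h2.le]) hp0 hp1
    simpa using this
  have ht2 : t ^ p = 2 ^ p * (t / 2) ^ p := by
    rw [← Real.mul_rpow h2.le (by positivity)]
    congr 1
    field_simp
  have h2p : (0:ℝ) < (2:ℝ) ^ p := Real.rpow_pos_of_pos h2 p
  have h2p1 : (2:ℝ) ^ (p - 1) = 2 ^ p / 2 := by
    rw [Real.rpow_sub h2, Real.rpow_one]
  rw [ht2, h2p1]
  calc 2 ^ p * (t / 2) ^ p ≤ 2 ^ p * (1 + p * (t / 2 - 1)) := by
        exact mul_le_mul_of_nonneg_left key h2p.le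
    _ = 2 ^ p * (1 - p) + p * (2 ^ p / 2) * t := by ring

set_option maxHeartbeats 1000000 in
theorem stmt_1 (p : ℝ) (hp0 : 0 ≤ p) (hp1 : p ≤ 1) (x : ℝ) (hx : 0 < x) :
    (∑' n : ℕ, (x / ((n : ℝ) + 1)) ^ p * x ^ (n + 1) / (n + 1).factorial)
      ≤ 2 ^ p * (Real.exp x - 1) := by
  have hsum0 : Summable (fun n : ℕ => x ^ n / n.factorial) :=
    Real.summable_pow_div_factorial x
  have hexp : Real.exp x = ∑' n : ℕ, x ^ n / n.factorial := by
    rw [Real.exp_eq_exp_ℝ, NormedSpace.exp_eq_tsum_div]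
  -- the weight function
  set w : ℕ → ℝ := fun n => x ^ (n + 1) / (n + 1).factorial with hw
  have hwpos : ∀ n, 0 < w n := fun n => by
    have : (0:ℝ) < (n + 1).factorial := by positivity
    exact div_pos (pow_pos hx _) this
  have hwsum : Summable w := (summable_nat_add_iff 1).2 hsum0
  have hwT : ∑' n, w n = Real.exp x - 1 := by
    have h0 := (Summable.tsum_eq_zero_add hsum0)
    rw [hexp]
    simp only [pow_zero, Nat.factorial_zero] at h0
    rw [h0]
    simp [hw]
  -- the second weight: v n = x^(n+2) / (n+2)!
  set v : ℕ → ℝ := fun n => x ^ (n + 2) / (n + 2).factorial with hv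
  have hvsum : Summable v := (summable_nat_add_iff 2).2 hsum0
  have hvT : ∑' n, v n = Real.exp x - 1 - x := by
    have h0 := (Summable.tsum_eq_zero_add hsum0)
    have h1 := (Summable.tsum_eq_zero_add ((summable_nat_add_iff 1).2 hsum0))
    simp only [pow_zero, Nat.factorial_zero] at h0
    simp only [zero_add, pow_one, Nat.factorial_one] at h1
    rw [hexp, h0, h1]
    simp [hv]
  -- u n = (x/(n+1)) * w n ≤ 2 * v n
  set u : ℕ → ℝ := fun n => x / ((n : ℝ) + 1) * w n with hu
  have hune : ∀ n, 0 ≤ u n := fun n => by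
    have := (hwpos n).le
    have : (0:ℝ) ≤ x / ((n:ℝ)+1) := by positivity
    positivity
  have huv : ∀ n, u n ≤ 2 * v n := by
    intro n
    have hfac : ((n + 2).factorial : ℝ) = ((n:ℝ) + 2) * (n + 1).factorial := by
      rw [Nat.factorial_succ]
      push_cast
      ring
    have hn1 : (0:ℝ) < (n:ℝ) + 1 := by positivity
    have hf1 : (0:ℝ) < ((n + 1).factorial : ℝ) := by positivity
    have h1 : u n = x ^ (n + 2) / (((n:ℝ) + 1) * (n + 1).factorial) := by
      simp only [hu, hw]
      field_simp
      ring
    have h2 : 2 * v n = 2 * x ^ (n + 2) / (((n:ℝ) + 2) * (n + 1).factorial) := by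
      simp only [hv, hfac]
      ring
    rw [h1, h2]
    rw [div_le_div_iff₀ (by positivity) (by positivity)]
    have hx2 : (0:ℝ) ≤ x ^ (n + 2) := by positivity
    nlinarith [mul_nonneg hx2 hf1.le]
  have husum : Summable u := Summable.of_nonneg_of_le hune huv (hvsum.mul_left 2)
  have huT : ∑' n, u n ≤ 2 * (Real.exp x - 1) := by
    calc ∑' n, u n ≤ ∑' n, 2 * v n := Summable.tsum_le_tsum huv husum (hvsum.mul_left 2)
      _ = 2 * (Real.exp x - 1 - x) := by rw [tsum_mul_left, hvT]
      _ ≤ 2 * (Real.exp x - 1) := by linarith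
  -- pointwise bound on the main term
  set f : ℕ → ℝ := fun n => (x / ((n : ℝ) + 1)) ^ p * x ^ (n + 1) / (n + 1).factorial
    with hf
  have hfg : ∀ n, f n ≤ 2 ^ p * (1 - p) * w n + p * 2 ^ (p - 1) * u n := by
    intro n
    have ht : (0:ℝ) ≤ x / ((n:ℝ)+1) := by positivity
    have key := aux_tangent ht hp0 hp1
    have hfn : f n = (x / ((n : ℝ) + 1)) ^ p * w n := by
      simp only [hf, hw]; ring
    have hun : u n = x / ((n : ℝ) + 1) * w n := rfl
    rw [hfn, hun]
    nlinarith [hwpos n, mul_le_mul_of_nonneg_right key (hwpos n).le]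
  have hfnn : ∀ n, 0 ≤ f n := by
    intro n
    have : (0:ℝ) ≤ x / ((n:ℝ)+1) := by positivity
    have h1 : (0:ℝ) ≤ (x / ((n:ℝ)+1)) ^ p := Real.rpow_nonneg this p
    have : (0:ℝ) < ((n + 1).factorial : ℝ) := by positivity
    positivity
  have hgsum : Summable (fun n => 2 ^ p * (1 - p) * w n + p * 2 ^ (p - 1) * u n) :=
    (hwsum.mul_left _).add (husum.mul_left _)
  have hfsum : Summable f := Summable.of_nonneg_of_le hfnn hfg hgsum
  have hcoef1 : (0:ℝ) ≤ 2 ^ p * (1 - p) := by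
    have := Real.rpow_pos_of_pos (by norm_num : (0:ℝ) < 2) p
    nlinarith
  have hcoef2 : (0:ℝ) ≤ p * 2 ^ (p - 1) := by
    have := Real.rpow_pos_of_pos (by norm_num : (0:ℝ) < 2) (p - 1)
    nlinarith
  calc (∑' n, f n) ≤ ∑' n, (2 ^ p * (1 - p) * w n + p * 2 ^ (p - 1) * u n) :=
        Summable.tsum_le_tsum hfg hfsum hgsum
    _ = 2 ^ p * (1 - p) * (∑' n, w n) + p * 2 ^ (p - 1) * (∑' n, u n) := by
        rw [Summable.tsum_add (hwsum.mul_left _) (husum.mul_left _), tsum_mul_left, tsum_mul_left]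
    _ ≤ 2 ^ p * (1 - p) * (Real.exp x - 1) + p * 2 ^ (p - 1) * (2 * (Real.exp x - 1)) := by
        rw [hwT]
        exact add_le_add (le_refl _) (mul_le_mul_of_nonneg_left huT hcoef2)
    _ = 2 ^ p * (Real.exp x - 1) := by
        have h2p1 : (2:ℝ) ^ (p - 1) = 2 ^ p / 2 := by
          rw [Real.rpow_sub (by norm_num), Real.rpow_one]
        rw [h2p1]; ring
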